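/- Let G=(V,E,I,T) be a grapht and let ℱ={X_t : t∈T} be a family of pairwise disjoint subsets of V with t∈X_t, such that each X_t is boundary-linked: there is a system 𝒫_t={P_{t,e} : e∈δ_G(X_t)} of pairwise edge-disjoint paths where e is the first edge and t is the last vertex of P_{t,e}. Then for every system 𝒫 of pairwise edge-disjoint T-paths in G/ℱ there is a system 𝒫' of pairwise edge-disjoint T-paths in G such that for every P∈𝒫 there is a P'∈𝒫' with the same endpoints as P and E(P')⊇E(P). Moreover, 𝒫' can be chosen so that it links every t∈T for which 𝒫 links t in G/ℱ and 𝒫_t covers δ_G(t). -/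

import Mathlib

/-! Common definitions: graphts (multigraphs with terminals), walks, paths, cycles,
edge cuts, inner Eulerian graphts, path systems, linkages, Erdős–Menger cuts,
restriction (edge deletion) and contraction. -/

universe u v

/-- A *grapht*: a multigraph (no loops, parallel edges allowed) given by an incidence
function `I : E → Sym2 V`, together with a set `T` of at least two terminal vertices. -/
structure Grapht (V : Type u) (E : Type v) where
  I : E → Sym2 V
  loopless : ∀ e : E, ¬ (I e).IsDiag
  T : Set V
  T_nontrivial : T.Nontrivial

namespace Grapht

variable {V : Type u} {E : Type v}

/-- `G.IsWalk vs es` holds when `vs` is the vertex sequence and `es` the edge sequence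
of a walk in `G`. -/
inductive IsWalk (G : Grapht V E) : List V → List E → Prop
  | nil (v : V) : IsWalk G [v] []
  | cons {u w : V} {vs : List V} {e : E} {es : List E} :
      G.I e = s(u, w) → IsWalk G (w :: vs) es → IsWalk G (u :: w :: vs) (e :: es)

/-- A finite path in the grapht `G` (no repeated vertices), with endpoints `first`, `last`. -/
structure Path (G : Grapht V E) where
  first : V
  last : V
  verts : List V
  edges : List E
  isWalk : G.IsWalk verts edges
  nodup : verts.Nodup
  head_eq : verts.head? = some first
  getLast_eq : verts.getLast? = some last

/-- A finite cycle in the grapht `G`. -/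
structure Cycle (G : Grapht V E) where
  verts : List V
  edges : List E
  isWalk : G.IsWalk verts edges
  closed : verts.head? = verts.getLast?
  nontrivial : edges ≠ []
  edges_nodup : edges.Nodup
  tail_nodup : verts.tail.Nodup

variable {G : Grapht V E}

/-- The internal (inner) vertices of a path. -/
def Path.inner (P : G.Path) : List V := (P.verts.drop 1).dropLast

/-- The edge set of a path. -/
def Path.edgeSet (P : G.Path) : Set E := {e | e ∈ P.edges}

/-- The edge set of a cycle. -/
def Cycle.edgeSet (C : G.Cycle) : Set E := {e | e ∈ C.edges}

variable (G)

/-- `δ_G(X)`: the set of edges with exactly one endpoint in `X`. -/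
def edgeCut (X : Set V) : Set E :=
  {e | ∃ u w, G.I e = s(u, w) ∧ u ∈ X ∧ w ∉ X}

/-- A grapht is *inner Eulerian* if there is no `X ⊆ V ∖ T` whose cut `δ(X)` is a
finite set of odd size. -/
def InnerEulerian : Prop :=
  ∀ X : Set V, Disjoint X G.T → ¬ ((G.edgeCut X).Finite ∧ Odd (G.edgeCut X).ncard)

/-- An `AB`-path: a path with first vertex in `A`, last vertex in `B` and no internal
vertex in `A ∪ B`. -/
def IsABPath (A B : Set V) (P : G.Path) : Prop :=
  P.first ∈ A ∧ P.last ∈ B ∧ ∀ v ∈ P.inner, v ∉ A ∪ B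

/-- A `T`-path: a path between two distinct terminal vertices without internal
terminal vertices. -/
def IsTPath (P : G.Path) : Prop :=
  P.first ∈ G.T ∧ P.last ∈ G.T ∧ P.first ≠ P.last ∧ ∀ v ∈ P.inner, v ∉ G.T

/-- A system of pairwise edge-disjoint paths. -/
def EdgeDisjoint (Ps : Set G.Path) : Prop :=
  Ps.Pairwise fun P Q => ∀ e, e ∈ P.edges → e ∉ Q.edges

/-- A system of pairwise edge-disjoint `T`-paths. -/
def IsTPathSystem (Ps : Set G.Path) : Prop :=
  G.EdgeDisjoint Ps ∧ ∀ P ∈ Ps, G.IsTPath P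

/-- The set of edges used by a path system. -/
def sysEdges (Ps : Set G.Path) : Set E := ⋃ P ∈ Ps, P.edgeSet

/-- `C` is *orthogonal* to the path system `Ps`: `C` consists of exactly one edge from
each path of `Ps`. -/
def Orthogonal (C : Set E) (Ps : Set G.Path) : Prop :=
  (∀ P ∈ Ps, ∃! e, e ∈ C ∧ e ∈ P.edges) ∧ ∀ e ∈ C, ∃ P ∈ Ps, e ∈ P.edges

/-- `C` separates `A` and `B`: every `AB`-path meets `C` (i.e. `G − C` has no `AB`-path). -/
def Separates (C : Set E) (A B : Set V) : Prop :=
  ∀ P : G.Path, G.IsABPath A B P → ∃ e ∈ C, e ∈ P.edges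

/-- An `AB`-cut. -/
def IsABCut (A B : Set V) (C : Set E) : Prop :=
  ∀ P : G.Path, G.IsABPath A B P → ∃ e ∈ C, e ∈ P.edges

/-- An Erdős–Menger `AB`-cut: an `AB`-cut orthogonal to some system of pairwise
edge-disjoint `AB`-paths. -/
def IsEMABCut (A B : Set V) (C : Set E) : Prop :=
  G.IsABCut A B C ∧
    ∃ Ps : Set G.Path, G.EdgeDisjoint Ps ∧ (∀ P ∈ Ps, G.IsABPath A B P) ∧ G.Orthogonal C Ps

/-- The order `⊴` on (Erdős–Menger) `AB`-cuts: on every `AB`-path the first edge of `C`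
comes no later than the first edge of `C'`. -/
def ABCutLE (A B : Set V) (C C' : Set E) : Prop :=
  ∀ P : G.Path, G.IsABPath A B P →
    ∀ i : Fin P.edges.length, P.edges.get i ∈ C' →
      ∃ j : Fin P.edges.length, (j : ℕ) ≤ (i : ℕ) ∧ P.edges.get j ∈ C

/-- `C` is the `⊴`-largest Erdős–Menger `AB`-cut. -/
def IsLargestEMABCut (A B : Set V) (C : Set E) : Prop :=
  G.IsEMABCut A B C ∧ ∀ C', G.IsEMABCut A B C' → G.ABCutLE A B C' C

/-- A system `Ps` of pairwise edge-disjoint `T`-paths *links* the terminal `t`: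
it covers `δ(t)`. -/
def Links (Ps : Set G.Path) (t : V) : Prop :=
  G.IsTPathSystem Ps ∧ ∀ e ∈ G.edgeCut {t}, ∃ P ∈ Ps, e ∈ P.edges

/-- The terminal `t` is linked. -/
def Linked (t : V) : Prop := ∃ Ps : Set G.Path, G.Links Ps t

/-- The linkability condition: every terminal is linked. -/
def LinkabilityCondition : Prop := ∀ t ∈ G.T, G.Linked t

/-- A perfect linkage: a system of pairwise edge-disjoint `T`-paths linking every
terminal. -/
def IsPerfectLinkage (Ps : Set G.Path) : Prop :=
  G.IsTPathSystem Ps ∧ ∀ t ∈ G.T, ∀ e ∈ G.edgeCut {t}, ∃ P ∈ Ps, e ∈ P.edges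

/-- In the two-terminal setting: a system of pairwise edge-disjoint `st`-paths
covering `δ(s)` (a linkage of `s`). -/
def IsStLinkage (s t : V) (Ps : Set G.Path) : Prop :=
  G.EdgeDisjoint Ps ∧ (∀ P ∈ Ps, G.IsABPath {s} {t} P) ∧
    ∀ e ∈ G.edgeCut {s}, ∃ P ∈ Ps, e ∈ P.edges

/-- `s` is linked (two-terminal setting). -/
def StLinked (s t : V) : Prop := ∃ Ps : Set G.Path, G.IsStLinkage s t Ps

/-- `λ_G(A,B)`: the maximal number of pairwise edge-disjoint `AB`-paths. -/
noncomputable def lambda (A B : Set V) : ℕ :=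
  sSup {n : ℕ | ∃ Ps : Set G.Path, G.EdgeDisjoint Ps ∧ (∀ P ∈ Ps, G.IsABPath A B P) ∧
    Ps.Finite ∧ Ps.ncard = n}

/-- The grapht obtained by deleting all edges outside `F`. -/
def restrict (F : Set E) : Grapht V F where
  I e := G.I e.1
  loopless e := G.loopless e.1
  T := G.T
  T_nontrivial := G.T_nontrivial

/-- The map sending every vertex of a contracted set `X t` (`t ∈ T`) to `t`. -/
noncomputable def contractMap (X : V → Set V) : V → V := fun v =>
  letI := Classical.dec (∃ u ∈ G.T, v ∈ X u)
  if h : ∃ u ∈ G.T, v ∈ X u then h.choose else v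

/-- The contraction `G/ℱ` of the family `ℱ = {X t : t ∈ T}`: each `X t` is contracted
to `t` and the arising loops are deleted. -/
noncomputable def contract (X : V → Set V) :
    Grapht V {e : E // ¬ ((G.I e).map (G.contractMap X)).IsDiag} where
  I e := (G.I e.1).map (G.contractMap X)
  loopless e := e.2
  T := G.T
  T_nontrivial := G.T_nontrivial

end Grapht


section Helpers

theorem List.getLast?_append_tail {α : Type*} {l1 l2 : List α}
    (h : l1.getLast? = l2.head?) (h2 : l2 ≠ []) :
    (l1 ++ l2.tail).getLast? = l2.getLast? := by
  cases l2 with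
  | nil => simp at h2
  | cons x l2' =>
    cases l2' with
    | nil => simpa using h
    | cons y l2'' =>
      rw [List.tail_cons, List.getLast?_cons_cons]
      exact List.getLast?_append_of_ne_nil _ (List.cons_ne_nil _ _)

theorem List.mem_split_ends {α : Type*} {vs : List α} {a b v : α}
    (ha : vs.head? = some a) (hb : vs.getLast? = some b) (hv : v ∈ vs) :
    v = a ∨ v = b ∨ v ∈ (vs.drop 1).dropLast := by
  cases vs with
  | nil => simp at hv
  | cons x rest =>
    simp only [List.head?_cons, Option.some.injEq] at ha
    subst ha
    rcases List.mem_cons.1 hv with rfl | hv'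
    · exact Or.inl rfl
    · have hrne : rest ≠ [] := List.ne_nil_of_mem hv'
      have hbl : rest.getLast hrne = b := by
        have : rest.getLast? = some b := by
          rw [← hb]; cases rest with
          | nil => simp at hrne
          | cons y r => rw [List.getLast?_cons_cons]
        rw [List.getLast?_eq_getLast hrne] at this
        exact Option.some.inj this
      have hdec : rest.dropLast ++ [b] = rest := by rw [← hbl]; exact List.dropLast_append_getLast hrne
      rw [← hdec] at hv'
      rcases List.mem_append.1 hv' with h1 | h2
      · exact Or.inr (Or.inr (by simpa using h1))
      · exact Or.inr (Or.inl (by simpa using h2))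

theorem List.inner_props {α : Type*} {vs : List α} {a b v : α}
    (hnd : vs.Nodup) (ha : vs.head? = some a) (hb : vs.getLast? = some b)
    (hv : v ∈ (vs.drop 1).dropLast) : v ∈ vs ∧ v ≠ a ∧ v ≠ b := by
  cases vs with
  | nil => simp at hv
  | cons x rest =>
    simp only [List.head?_cons, Option.some.injEq] at ha
    subst ha
    simp only [List.drop_succ_cons, List.drop_zero] at hv
    have hvr : v ∈ rest := (List.dropLast_sublist rest).mem hv
    have hrne : rest ≠ [] := List.ne_nil_of_mem hvr
    have hbl : rest.getLast hrne = b := by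
      have : rest.getLast? = some b := by
        rw [← hb]; cases rest with
        | nil => simp at hrne
        | cons y r => rw [List.getLast?_cons_cons]
      rw [List.getLast?_eq_getLast hrne] at this
      exact Option.some.inj this
    refine ⟨List.mem_cons_of_mem _ hvr, ?_, ?_⟩
    · rintro rfl; exact (List.nodup_cons.1 hnd).1 hvr
    · rintro rfl
      have hdec : rest.dropLast ++ [v] = rest := by rw [← hbl]; exact List.dropLast_append_getLast hrne
      have hnd2 : rest.Nodup := (List.nodup_cons.1 hnd).2
      rw [← hdec] at hnd2
      rcases List.nodup_append.1 hnd2 with ⟨-, -, hdisj⟩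
      exact hdisj v hv v (by simp) rfl


theorem List.eq_dropLast_append {A : Type*} {l : List A} {b : A}
    (h : l.getLast? = some b) : l = l.dropLast ++ [b] := by
  cases l with
  | nil => simp at h
  | cons x r =>
    have hne : x :: r ≠ [] := by simp
    rw [List.getLast?_eq_getLast hne, Option.some.injEq] at h
    rw [← h]
    exact (List.dropLast_append_getLast hne).symm

theorem Sym2.exists_eq_mk {α : Type*} (z : Sym2 α) : ∃ a b, z = s(a, b) := by
  induction z using Sym2.ind with | _ x y => exact ⟨x, y, rfl⟩

theorem Sym2.map_eq_mk {α β : Type*} {f : α → β} {z : Sym2 α} {x y : β}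
    (h : z.map f = s(x, y)) : ∃ a b, z = s(a, b) ∧ f a = x ∧ f b = y := by
  obtain ⟨a, b, rfl⟩ := Sym2.exists_eq_mk z
  rw [Sym2.map_pair_eq, Sym2.eq_iff] at h
  rcases h with ⟨h1, h2⟩ | ⟨h1, h2⟩
  · exact ⟨a, b, rfl, h1, h2⟩
  · exact ⟨b, a, Sym2.eq_swap, h2, h1⟩

end Helpers

namespace Grapht

variable {V : Type u} {E : Type v} {G : Grapht V E}

theorem IsWalk.verts_ne_nil {vs : List V} {es : List E} (h : G.IsWalk vs es) : vs ≠ [] := by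
  cases h <;> simp

theorem IsWalk.length_verts {vs : List V} {es : List E} (h : G.IsWalk vs es) :
    vs.length = es.length + 1 := by
  induction h with
  | nil => simp
  | cons _ _ ih => simp [ih]

theorem IsWalk.of_singleton {v : V} {es : List E} (h : G.IsWalk [v] es) : es = [] := by
  cases h; rfl

theorem IsWalk.append {vs1 vs2 : List V} {es1 es2 : List E} (h1 : G.IsWalk vs1 es1)
    (h2 : G.IsWalk vs2 es2) (hglue : vs1.getLast? = vs2.head?) :
    G.IsWalk (vs1 ++ vs2.tail) (es1 ++ es2) := by
  induction h1 with
  | nil v =>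
    cases h2 with
    | nil w => simp_all; simpa [show w = v by simpa using hglue.symm] using IsWalk.nil (G := G) v
    | cons hI hw =>
      rename_i u w vs e es
      simp only [List.getLast?_singleton, List.head?_cons, Option.some.injEq] at hglue
      subst hglue
      simpa using IsWalk.cons hI hw
  | cons hI _ ih =>
    rename_i u w vs e es
    simp only [List.getLast?_cons_cons] at hglue
    exact IsWalk.cons hI (ih hglue)

theorem IsWalk.reverse {vs : List V} {es : List E} (h : G.IsWalk vs es) :
    G.IsWalk vs.reverse es.reverse := by
  induction h with
  | nil v => simpa using IsWalk.nil (G := G) v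
  | cons hI hw ih =>
    rename_i u w vs e es
    have h2 : G.IsWalk [w, u] [e] := IsWalk.cons (by rw [hI]; exact Sym2.eq_swap) (IsWalk.nil u)
    have := ih.append h2 (by simp [List.getLast?_reverse])
    simpa using this

theorem IsWalk.endpoints_mem {vs : List V} {es : List E} (h : G.IsWalk vs es) {e : E}
    (he : e ∈ es) {x : V} (hx : x ∈ G.I e) : x ∈ vs := by
  induction h with
  | nil v => simp at he
  | cons hI hw ih =>
    rename_i u w vs e' es
    rcases List.mem_cons.1 he with rfl | he'
    · rw [hI] at hx
      rcases Sym2.mem_iff.1 hx with rfl | rfl <;> simp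
    · exact List.mem_cons_of_mem _ (ih he')

theorem IsWalk.edges_nodup {vs : List V} {es : List E} (h : G.IsWalk vs es)
    (hn : vs.Nodup) : es.Nodup := by
  induction h with
  | nil => simp
  | cons hI hw ih =>
    rename_i u w vs e es
    rw [List.nodup_cons] at hn
    rw [List.nodup_cons]
    refine ⟨fun he => ?_, ih hn.2⟩
    have : u ∈ w :: vs := hw.endpoints_mem he (by rw [hI]; simp)
    exact hn.1 this

/-- every vertex of a walk with at least one edge is an endpoint of some edge -/
theorem IsWalk.mem_exists_edge {vs : List V} {es : List E} (h : G.IsWalk vs es)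
    (hne : es ≠ []) {v : V} (hv : v ∈ vs) : ∃ e ∈ es, v ∈ G.I e := by
  induction h with
  | nil => simp at hne
  | cons hI hw ih =>
    rename_i u w vs e es
    rcases List.mem_cons.1 hv with rfl | hv'
    · exact ⟨e, by simp, by rw [hI]; simp⟩
    · rcases List.eq_nil_or_concat es with rfl | hne'
      · cases hw with
        | nil =>
          simp only [List.mem_singleton] at hv'
          exact ⟨e, by simp, by rw [hI, hv']; simp⟩
      · obtain ⟨e', he', hxe⟩ := ih (by rcases hne' with ⟨a, b, rfl⟩; simp) hv'
        exact ⟨e', by simp [he'], hxe⟩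

/-- vertices of a walk whose edges avoid the cut of S, ending in S, are all in S -/
theorem IsWalk.all_mem_of_avoid_cut {S : Set V} {vs : List V} {es : List E}
    (h : G.IsWalk vs es) (hav : ∀ g ∈ es, g ∉ G.edgeCut S) {z : V}
    (hz : vs.getLast? = some z) (hzS : z ∈ S) : ∀ v ∈ vs, v ∈ S := by
  induction h with
  | nil v =>
    simp only [List.getLast?_singleton, Option.some.injEq] at hz
    subst hz; simpa using hzS
  | cons hI hw ih =>
    rename_i u w vs e es
    rw [List.getLast?_cons_cons] at hz
    have hall := ih (fun g hg => hav g (List.mem_cons_of_mem _ hg)) hz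
    intro v hv
    rcases List.mem_cons.1 hv with rfl | hv'
    · by_contra hvS
      exact hav e (by simp) ⟨w, v, by rw [hI]; exact Sym2.eq_swap,
        hall _ (by simp), hvS⟩
    · exact hall v hv'



/-- decomposition of a walk with distinguished endpoints -/
theorem IsWalk.decomp {a b : V} {vs : List V} {es : List E}
    (h : G.IsWalk (a :: (vs ++ [b])) es) (hne : vs ≠ []) :
    ∃ e1 em mids v2 vm, es = e1 :: (mids ++ [em]) ∧ vs.head? = some v2 ∧
      vs.getLast? = some vm ∧ G.I e1 = s(a, v2) ∧ G.I em = s(vm, b) ∧ G.IsWalk vs mids := by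
  induction vs generalizing a es with
  | nil => simp at hne
  | cons v vs' ih =>
    cases h with
    | cons hI hw =>
      rename_i e es'
      cases vs' with
      | nil =>
        cases hw with
        | cons hI2 hw2 =>
          rename_i e2 es2
          cases hw2 with
          | nil => exact ⟨e, e2, [], v, v, rfl, rfl, rfl, hI, hI2, IsWalk.nil v⟩
      | cons w vs'' =>
        obtain ⟨e1', em, mids', v2', vm, hes', hhead, hlast, hIe1', hIem, hwmid⟩ :=
          ih (a := v) (es := es') (by simpa using hw) (by simp)
        rw [List.head?_cons, Option.some.injEq] at hhead
        subst hhead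
        refine ⟨e, em, e1' :: mids', v, vm, by rw [hes']; rfl, rfl, ?_, hI, hIem, ?_⟩
        · rw [List.getLast?_cons_cons]; exact hlast
        · exact IsWalk.cons hIe1' hwmid

/-- if an edge of a walk with nodup vertices is incident with the first vertex,
it is the first edge -/
theorem IsWalk.head_edge {vs : List V} {es : List E} (h : G.IsWalk vs es)
    (hnd : vs.Nodup) {e : E} (he : e ∈ es) {x : V} (hx : x ∈ G.I e)
    (hhead : vs.head? = some x) : es.head? = some e := by
  cases h with
  | nil => simp at he
  | cons hI hw =>
    rename_i u w vs' e' es'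
    simp only [List.head?_cons, Option.some.injEq] at hhead
    subst hhead
    rcases List.mem_cons.1 he with rfl | he'
    · rfl
    · exact absurd (hw.endpoints_mem he' hx) (List.nodup_cons.1 hnd).1

theorem IsWalk.last_edge {vs : List V} {es : List E} (h : G.IsWalk vs es)
    (hnd : vs.Nodup) {e : E} (he : e ∈ es) {x : V} (hx : x ∈ G.I e)
    (hlast : vs.getLast? = some x) : es.getLast? = some e := by
  have h2 := h.reverse
  have : es.reverse.head? = some e :=
    h2.head_edge (by simpa using hnd) (by simpa using he) hx (by simpa using hlast)
  rwa [List.head?_reverse] at this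

end Grapht


namespace Grapht

variable {V : Type u} {E : Type v} {G : Grapht V E}

theorem IsWalk.cons_inv {vs : List V} {e : E} {est : List E} (h : G.IsWalk vs (e :: est)) :
    ∃ u w vs', vs = u :: w :: vs' ∧ G.I e = s(u, w) ∧ G.IsWalk (w :: vs') est := by
  cases h with
  | cons hI hw => exact ⟨_, _, _, rfl, hI, hw⟩

theorem IsWalk.nil_inv {vs : List V} (h : G.IsWalk vs []) : ∃ v, vs = [v] := by
  cases h with
  | nil v => exact ⟨v, rfl⟩

theorem contractMap_spec (G : Grapht V E) (X : V → Set V) (v : V) :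
    (G.contractMap X v ∈ G.T ∧ v ∈ X (G.contractMap X v)) ∨
      (G.contractMap X v = v ∧ ¬∃ u ∈ G.T, v ∈ X u) := by
  unfold contractMap
  split
  · next h => exact Or.inl ⟨h.choose_spec.1, h.choose_spec.2⟩
  · next h => exact Or.inr ⟨rfl, h⟩

section Contract

variable {X : V → Set V}

theorem cm_eq_iff (hmem : ∀ t ∈ G.T, t ∈ X t)
    (hdisj : ∀ t ∈ G.T, ∀ t' ∈ G.T, t ≠ t' → Disjoint (X t) (X t'))
    {t v : V} (ht : t ∈ G.T) : G.contractMap X v = t ↔ v ∈ X t := by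
  constructor
  · intro h
    rcases contractMap_spec G X v with ⟨h1, h2⟩ | ⟨h1, h2⟩
    · rwa [h] at h2
    · rw [h1] at h; subst h; exact hmem v ht
  · intro hv
    rcases contractMap_spec G X v with ⟨h1, h2⟩ | ⟨h1, h2⟩
    · by_contra hne
      exact Set.disjoint_left.1 (hdisj _ h1 t ht hne) h2 hv
    · exact absurd ⟨t, ht, hv⟩ h2

theorem cm_fix_range {z v : V} (h : G.contractMap X z = v) (hvT : v ∉ G.T) :
    z = v ∧ ∀ u ∈ G.T, v ∉ X u := by
  rcases contractMap_spec G X z with ⟨h1, h2⟩ | ⟨h1, h2⟩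
  · rw [h] at h1; exact absurd h1 hvT
  · have hz : z = v := by rw [← h1, h]
    subst hz
    push_neg at h2
    exact ⟨rfl, h2⟩

theorem contract_I (e : {e : E // ¬ ((G.I e).map (G.contractMap X)).IsDiag}) :
    (G.contract X).I e = (G.I e.1).map (G.contractMap X) := rfl

theorem liftInnerWalk {vs : List V} {es : List {e : E // ¬ ((G.I e).map (G.contractMap X)).IsDiag}}
    (h : (G.contract X).IsWalk vs es)
    (hOK : ∀ v ∈ vs, ∀ z, G.contractMap X z = v → z = v) :
    G.IsWalk vs (es.map Subtype.val) := by
  induction h with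
  | nil v => exact IsWalk.nil v
  | cons hI hw ih =>
    rename_i u w vs' e es'
    rw [contract_I] at hI
    obtain ⟨a, b, hab, ha, hb⟩ := Sym2.map_eq_mk hI
    have ha' : a = u := hOK u (by simp) a ha
    have hb' : b = w := hOK w (by simp) b hb
    subst ha' hb'
    exact IsWalk.cons hab (ih fun v hv => hOK v (List.mem_cons_of_mem _ hv))

theorem end_lift (hmem : ∀ t ∈ G.T, t ∈ X t)
    (hdisj : ∀ t ∈ G.T, ∀ t' ∈ G.T, t ≠ t' → Disjoint (X t) (X t'))
    {t v : V} (ht : t ∈ G.T)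
    {e : {e : E // ¬ ((G.I e).map (G.contractMap X)).IsDiag}}
    (hI : (G.contract X).I e = s(t, v))
    (hOK : ∀ z, G.contractMap X z = v → z = v) :
    ∃ α, G.I e.1 = s(α, v) ∧ α ∈ X t := by
  rw [contract_I] at hI
  obtain ⟨a, b, hab, ha, hb⟩ := Sym2.map_eq_mk hI
  have hb' : b = v := hOK b hb
  subst hb'
  exact ⟨a, hab, (cm_eq_iff hmem hdisj ht).1 ha⟩

theorem List.eq_cons_of_head? {A : Type*} {l : List A} {a : A} (h : l.head? = some a) :
    l = a :: l.tail := by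
  cases l with
  | nil => simp at h
  | cons x r => simp only [List.head?_cons, Option.some.injEq] at h; subst h; rfl

theorem tail_structure {Pt : V → E → G.Path} {t : V}
    (hBL1 : ∀ e ∈ G.edgeCut (X t), ∀ e' ∈ G.edgeCut (X t), e ≠ e' →
      ∀ f ∈ (Pt t e).edges, f ∉ (Pt t e').edges)
    (hBL2 : ∀ e ∈ G.edgeCut (X t), (Pt t e).edges.head? = some e ∧ (Pt t e).last = t)
    (htX : t ∈ X t) {f : E} (hf : f ∈ G.edgeCut (X t)) :
    ∃ q0 q1 qs, (Pt t f).verts = q0 :: q1 :: qs ∧ G.I f = s(q0, q1) ∧ q0 ∉ X t ∧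
      (∀ v ∈ q1 :: qs, v ∈ X t) ∧
      (Pt t f).edges = f :: (Pt t f).edges.tail ∧
      (∀ g ∈ (Pt t f).edges.tail, ∃ a b, G.I g = s(a, b) ∧ a ∈ X t ∧ b ∈ X t) := by
  obtain ⟨hhead, hlastQ⟩ := hBL2 f hf
  have hedQ : (Pt t f).edges = f :: (Pt t f).edges.tail := List.eq_cons_of_head? hhead
  have hw := (Pt t f).isWalk
  rw [hedQ] at hw
  obtain ⟨q0, q1, qs, hQv, hQI, hw2⟩ := hw.cons_inv
  have hnde : (Pt t f).edges.Nodup := (Pt t f).isWalk.edges_nodup (Pt t f).nodup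
  have hfnotail : f ∉ (Pt t f).edges.tail := by
    rw [hedQ] at hnde; exact (List.nodup_cons.1 hnde).1
  have havoid : ∀ g ∈ (Pt t f).edges.tail, g ∉ G.edgeCut (X t) := by
    intro g hg hgcut
    have hgf : f ≠ g := fun h => hfnotail (h ▸ hg)
    have hgQ : g ∈ (Pt t f).edges := by rw [hedQ]; exact List.mem_cons_of_mem _ hg
    have hghead : g ∈ (Pt t g).edges := by
      rw [List.eq_cons_of_head? (hBL2 g hgcut).1]; simp
    exact hBL1 f hf g hgcut hgf g hgQ hghead
  have hlast2 : (q1 :: qs).getLast? = some t := by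
    have := (Pt t f).getLast_eq
    rw [hQv, hlastQ] at this
    rw [← this, List.getLast?_cons_cons]
  have hqin : ∀ v ∈ q1 :: qs, v ∈ X t := hw2.all_mem_of_avoid_cut havoid hlast2 htX
  have hq0 : q0 ∉ X t := by
    obtain ⟨u, w, huw, hu, hwn⟩ := hf
    rw [hQI] at huw
    rcases Sym2.eq_iff.1 huw with ⟨h1, h2⟩ | ⟨h1, h2⟩
    · exact absurd (hqin q1 (by simp)) (h2 ▸ hwn)
    · exact h1 ▸ hwn
  refine ⟨q0, q1, qs, hQv, hQI, hq0, hqin, hedQ, ?_⟩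
  intro g hg
  obtain ⟨a, b, hab⟩ := Sym2.exists_eq_mk (G.I g)
  refine ⟨a, b, hab, hqin a (hw2.endpoints_mem hg (by rw [hab]; simp)),
    hqin b (hw2.endpoints_mem hg (by rw [hab]; simp))⟩

theorem mem_of_head? {α : Type*} {l : List α} {a : α} (h : l.head? = some a) : a ∈ l := by
  cases l with
  | nil => simp at h
  | cons x r => simp only [List.head?_cons, Option.some.injEq] at h; simp [h]

theorem mem_of_getLast? {α : Type*} {l : List α} {a : α} (h : l.getLast? = some a) : a ∈ l := by
  have := mem_of_head? (l := l.reverse) (by rwa [List.head?_reverse])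
  simpa using this

end Contract

end Grapht

namespace Grapht

variable {V : Type u} {E : Type v} {G : Grapht V E} {X : V → Set V}

/-- an edge with both endpoints in `X u` -/
def InsideE (G : Grapht V E) (X : V → Set V) (u : V) (g : E) : Prop :=
  ∃ a b, G.I g = s(a, b) ∧ a ∈ X u ∧ b ∈ X u

/-- characterization of the edges of a lifted path -/
def GoodEdge (G : Grapht V E) (X : V → Set V) (Pt : V → E → G.Path)
    (P : (G.contract X).Path) (g : E) : Prop :=
  (∃ f ∈ P.edges, g = f.1) ∨
    ∃ u ∈ G.T, ∃ h ∈ G.edgeCut (X u), (∃ f ∈ P.edges, f.1 = h) ∧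
      g ∈ (Pt u h).edges ∧ (g = h ∨ InsideE G X u g)

theorem construct
    (hmem : ∀ t ∈ G.T, t ∈ X t)
    (hdisj : ∀ t ∈ G.T, ∀ t' ∈ G.T, t ≠ t' → Disjoint (X t) (X t'))
    (Pt : V → E → G.Path)
    (hBL : ∀ t ∈ G.T,
      (∀ e ∈ G.edgeCut (X t), ∀ e' ∈ G.edgeCut (X t), e ≠ e' →
        ∀ f, f ∈ (Pt t e).edges → f ∉ (Pt t e').edges) ∧
      ∀ e ∈ G.edgeCut (X t), (Pt t e).edges.head? = some e ∧ (Pt t e).last = t)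
    (P : (G.contract X).Path) (hTP : (G.contract X).IsTPath P) :
    ∃ p' : G.Path, p'.first = P.first ∧ p'.last = P.last ∧ G.IsTPath p' ∧
      (∀ f ∈ P.edges, f.1 ∈ p'.edges) ∧
      (∀ g ∈ p'.edges, GoodEdge G X Pt P g) ∧
      (∀ e1, P.edges.head? = some e1 → ∀ g ∈ (Pt P.first e1.1).edges, g ∈ p'.edges) ∧
      (∀ em, P.edges.getLast? = some em → ∀ g ∈ (Pt P.last em.1).edges, g ∈ p'.edges) := by
  obtain ⟨hfT, hlT, hne, hinnT⟩ := hTP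
  have hedne : P.edges ≠ [] := by
    intro h
    have hw := P.isWalk
    rw [h] at hw
    obtain ⟨v, hv⟩ := hw.nil_inv
    have h1 := P.head_eq; have h2 := P.getLast_eq
    rw [hv] at h1 h2
    simp only [List.head?_cons, List.getLast?_singleton, Option.some.injEq] at h1 h2
    exact hne (h1.symm.trans h2)
  have hv : P.verts = P.first :: P.verts.tail := List.eq_cons_of_head? P.head_eq
  have hrestne : P.verts.tail ≠ [] := by
    intro h
    apply hedne
    have hl := P.isWalk.length_verts
    rw [hv, h] at hl
    simp only [List.length_cons, List.length_nil] at hl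
    exact List.eq_nil_of_length_eq_zero (by omega)
  have hlast_tail : P.verts.tail.getLast? = some P.last := by
    have h2 := P.getLast_eq
    rw [hv] at h2
    cases h : P.verts.tail with
    | nil => exact absurd h hrestne
    | cons y r =>
      rw [h] at h2
      rwa [List.getLast?_cons_cons] at h2
  have hinner_eq : P.inner = P.verts.tail.dropLast := by
    rw [Path.inner, List.drop_one]
  have hdec : P.verts = P.first :: (P.inner ++ [P.last]) := by
    rw [hinner_eq]
    conv_lhs => rw [hv]
    rw [← List.eq_dropLast_append hlast_tail]
  have hndv := P.nodup
  have hndinner : P.inner.Nodup := by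
    rw [hdec] at hndv
    exact ((List.nodup_append.1 (List.nodup_cons.1 hndv).2).1)
  have hinnOK : ∀ v ∈ P.inner, (∀ z, G.contractMap X z = v → z = v) ∧
      (∀ u ∈ G.T, v ∉ X u) := by
    intro v hvin
    have hvT : v ∉ G.T := hinnT v hvin
    have hvverts : v ∈ P.verts := by rw [hdec]; simp [hvin]
    obtain ⟨e, heP, hve⟩ := P.isWalk.mem_exists_edge hedne hvverts
    rw [contract_I] at hve
    obtain ⟨z, hz, hzv⟩ := Sym2.mem_map.1 hve
    exact ⟨fun z' hz' => (cm_fix_range hz' hvT).1, (cm_fix_range hzv hvT).2⟩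
  have hXT : ∀ u ∈ G.T, ∀ v ∈ X u, v ∈ G.T → v = u := by
    intro u hu v hvX hvT
    by_contra hne'
    exact Set.disjoint_left.1 (hdisj v hvT u hu hne') (hmem v hvT) hvX
  have hdisj_tt : Disjoint (X P.first) (X P.last) := hdisj _ hfT _ hlT hne
  obtain ⟨hBL1f, hBL2f⟩ := hBL P.first hfT
  obtain ⟨hBL1l, hBL2l⟩ := hBL P.last hlT
  by_cases hin : P.inner = []
  · -- single edge case
    have hv2 : P.verts = [P.first, P.last] := by rw [hdec, hin]; rfl
    have hw := P.isWalk
    rw [hv2] at hw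
    cases hpe0 : P.edges with
    | nil => exact absurd hpe0 hedne
    | cons e1 erest =>
    rw [hpe0] at hw
    obtain ⟨u, w, vs', heq, hI1, hw2⟩ := hw.cons_inv
    simp only [List.cons.injEq] at heq
    obtain ⟨h1, h2, h3⟩ := heq
    subst h1; subst h2
    rw [← h3] at hw2
    have herest : erest = [] := hw2.of_singleton
    subst herest
    have hpe : P.edges = [e1] := hpe0
    obtain ⟨α, β, hab, hα, hβ⟩ := Sym2.map_eq_mk (contract_I (X := X) e1 ▸ hI1)
    have hαX : α ∈ X P.first := (cm_eq_iff hmem hdisj hfT).1 hα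
    have hβX : β ∈ X P.last := (cm_eq_iff hmem hdisj hlT).1 hβ
    have hαn : α ∉ X P.last := fun h => Set.disjoint_left.1 hdisj_tt hαX h
    have hβn : β ∉ X P.first := fun h => Set.disjoint_left.1 hdisj_tt h hβX
    have hcut1 : e1.1 ∈ G.edgeCut (X P.first) := ⟨α, β, hab, hαX, hβn⟩
    have hcut2 : e1.1 ∈ G.edgeCut (X P.last) :=
      ⟨β, α, hab.trans Sym2.eq_swap, hβX, hαn⟩
    obtain ⟨q0, q1, qs, hQv, hQI, hq0, hqin, hQed, hQtin⟩ :=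
      tail_structure hBL1f hBL2f (hmem _ hfT) hcut1
    obtain ⟨r0, r1, rs, hRv, hRI, hr0, hrin, hRed, hRtin⟩ :=
      tail_structure hBL1l hBL2l (hmem _ hlT) hcut2
    obtain ⟨hq0b, hq1a⟩ : q0 = β ∧ q1 = α := by
      rcases Sym2.eq_iff.1 (hQI.symm.trans hab) with ⟨ha1, ha2⟩ | ⟨ha1, ha2⟩
      · exact absurd (ha1 ▸ hαX) hq0
      · exact ⟨ha1, ha2⟩
    rw [hq0b, hq1a] at hQv
    rw [hq1a] at hqin
    obtain ⟨hr0a, hr1b⟩ : r0 = α ∧ r1 = β := by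
      rcases Sym2.eq_iff.1 (hRI.symm.trans hab) with ⟨ha1, ha2⟩ | ⟨ha1, ha2⟩
      · exact ⟨ha1, ha2⟩
      · exact absurd (ha1 ▸ hβX) hr0
    rw [hr0a, hr1b] at hRv
    rw [hr1b] at hrin
    -- invert R's walk
    have hwR := (Pt P.last e1.1).isWalk
    rw [hRv, hRed] at hwR
    obtain ⟨u', w', vs'', heq', hIR, hwR2⟩ := hwR.cons_inv
    simp only [List.cons.injEq] at heq'
    obtain ⟨hb1, hb2, hb3⟩ := heq'
    subst hb1; subst hb2
    rw [← hb3] at hwR2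
    have hglue : (Pt P.first e1.1).verts.reverse.getLast? = (β :: rs).head? := by
      rw [List.getLast?_reverse, hQv]; rfl
    have hwalk' : G.IsWalk ((Pt P.first e1.1).verts.reverse ++ rs)
        ((Pt P.first e1.1).edges.reverse ++ (Pt P.last e1.1).edges.tail) := by
      have := (Pt P.first e1.1).isWalk.reverse.append hwR2 hglue
      simpa using this
    have hQlastv : (Pt P.first e1.1).verts.getLast? = some P.first := by
      rw [(Pt P.first e1.1).getLast_eq, (hBL2f e1.1 hcut1).2]
    have hRlastv : (Pt P.last e1.1).verts.getLast? = some P.last := by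
      rw [(Pt P.last e1.1).getLast_eq, (hBL2l e1.1 hcut2).2]
    have hAne : (Pt P.first e1.1).verts.reverse ≠ [] := by
      rw [hQv]; simp
    have hhead' : ((Pt P.first e1.1).verts.reverse ++ rs).head? = some P.first := by
      rw [List.head?_append_of_ne_nil _ hAne, List.head?_reverse]
      exact hQlastv
    have hlast' : ((Pt P.first e1.1).verts.reverse ++ rs).getLast? = some P.last := by
      have h2 := List.getLast?_append_tail hglue (by simp : (β :: rs) ≠ [])
      simp only [List.tail_cons] at h2
      rw [h2]
      have h3 := hRlastv
      rw [hRv, List.getLast?_cons_cons] at h3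
      exact h3
    have hndR := (Pt P.last e1.1).nodup
    rw [hRv] at hndR
    have hrs_nd : rs.Nodup := (List.nodup_cons.1 (List.nodup_cons.1 hndR).2).2
    have hβrs : β ∉ rs := (List.nodup_cons.1 (List.nodup_cons.1 hndR).2).1
    have hmemQ : ∀ x ∈ (Pt P.first e1.1).verts, x = β ∨ x ∈ X P.first := by
      intro x hx
      rw [hQv] at hx
      rcases List.mem_cons.1 hx with rfl | hx'
      · exact Or.inl rfl
      · exact Or.inr (hqin x hx')
    have hnd' : ((Pt P.first e1.1).verts.reverse ++ rs).Nodup := by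
      rw [List.nodup_append]
      refine ⟨by simpa using (Pt P.first e1.1).nodup, hrs_nd, ?_⟩
      intro x hx y hx2 hxy
      rw [← hxy] at hx2
      rcases hmemQ x (List.mem_reverse.1 hx) with rfl | hxX
      · exact hβrs hx2
      · exact Set.disjoint_left.1 hdisj_tt hxX (hrin x (List.mem_cons_of_mem _ hx2))
    refine ⟨⟨P.first, P.last, (Pt P.first e1.1).verts.reverse ++ rs,
        (Pt P.first e1.1).edges.reverse ++ (Pt P.last e1.1).edges.tail,
        hwalk', hnd', hhead', hlast'⟩, rfl, rfl, ⟨hfT, hlT, hne, ?_⟩, ?_, ?_, ?_, ?_⟩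
    · -- inner vertices not terminals
      intro v hvI hvT
      simp only [Path.inner] at hvI
      obtain ⟨hvv, hvft, hvlt⟩ := List.inner_props hnd' hhead' hlast' hvI
      rcases List.mem_append.1 hvv with hA | hB
      · rcases hmemQ v (List.mem_reverse.1 hA) with rfl | hvX
        · exact hvlt (hXT _ hlT _ hβX hvT)
        · exact hvft (hXT _ hfT _ hvX hvT)
      · exact hvlt (hXT _ hlT _ (hrin v (List.mem_cons_of_mem _ hB)) hvT)
    · -- edge superset
      intro f hf
      simp only [List.mem_singleton] at hf
      subst hf
      have : f.1 ∈ (Pt P.first f.1).edges := by rw [hQed]; simp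
      exact List.mem_append.2 (Or.inl (List.mem_reverse.2 this))
    · -- GoodEdge
      intro g hg
      have hfw : (∃ f ∈ P.edges, f.1 = e1.1) := ⟨e1, by rw [hpe]; simp, rfl⟩
      rcases List.mem_append.1 hg with hA | hB
      · have hgQ : g ∈ (Pt P.first e1.1).edges := List.mem_reverse.1 hA
        rw [hQed] at hgQ
        rcases List.mem_cons.1 hgQ with rfl | hg'
        · exact Or.inr ⟨P.first, hfT, e1.1, hcut1, hfw, by rw [hQed]; simp, Or.inl rfl⟩
        · exact Or.inr ⟨P.first, hfT, e1.1, hcut1, hfw,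
            by rw [hQed]; exact List.mem_cons_of_mem _ hg', Or.inr (hQtin g hg')⟩
      · exact Or.inr ⟨P.last, hlT, e1.1, hcut2, hfw,
          by rw [hRed]; exact List.mem_cons_of_mem _ hB, Or.inr (hRtin g hB)⟩
    · -- first tail contained
      intro ea hea g hg
      simp only [List.head?_cons, Option.some.injEq] at hea
      subst hea
      exact List.mem_append.2 (Or.inl (List.mem_reverse.2 hg))
    · -- last tail contained
      intro ea hea g hg
      simp only [List.getLast?_singleton, Option.some.injEq] at hea
      subst hea
      rw [hRed] at hg
      rcases List.mem_cons.1 hg with rfl | hg'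
      · refine List.mem_append.2 (Or.inl (List.mem_reverse.2 ?_))
        rw [hQed]; simp
      · exact List.mem_append.2 (Or.inr hg')
  · -- at least two edges
    have hw := P.isWalk
    rw [hdec] at hw
    obtain ⟨e1, em, mids, v2, vm, hpe, hihead, hilast, hI1, hIm, hwmid⟩ := hw.decomp hin
    have hv2in : v2 ∈ P.inner := mem_of_head? hihead
    have hvmin : vm ∈ P.inner := mem_of_getLast? hilast
    obtain ⟨hv2OK, hv2X⟩ := hinnOK v2 hv2in
    obtain ⟨hvmOK, hvmX⟩ := hinnOK vm hvmin
    obtain ⟨α, hab1, hαX⟩ := end_lift hmem hdisj hfT hI1 hv2OK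
    obtain ⟨γ, habm, hγX⟩ := end_lift hmem hdisj hlT (hIm.trans Sym2.eq_swap) hvmOK
    have hcut1 : e1.1 ∈ G.edgeCut (X P.first) := ⟨α, v2, hab1, hαX, hv2X _ hfT⟩
    have hcut2 : em.1 ∈ G.edgeCut (X P.last) := ⟨γ, vm, habm, hγX, hvmX _ hlT⟩
    obtain ⟨q0, q1, qs, hQv, hQI, hq0, hqin, hQed, hQtin⟩ :=
      tail_structure hBL1f hBL2f (hmem _ hfT) hcut1
    obtain ⟨r0, r1, rs, hRv, hRI, hr0, hrin, hRed, hRtin⟩ :=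
      tail_structure hBL1l hBL2l (hmem _ hlT) hcut2
    obtain ⟨hq0b, hq1a⟩ : q0 = v2 ∧ q1 = α := by
      rcases Sym2.eq_iff.1 (hQI.symm.trans hab1) with ⟨ha1, ha2⟩ | ⟨ha1, ha2⟩
      · exact absurd (ha1 ▸ hαX) hq0
      · exact ⟨ha1, ha2⟩
    rw [hq0b, hq1a] at hQv
    rw [hq1a] at hqin
    obtain ⟨hr0a, hr1b⟩ : r0 = vm ∧ r1 = γ := by
      rcases Sym2.eq_iff.1 (hRI.symm.trans habm) with ⟨ha1, ha2⟩ | ⟨ha1, ha2⟩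
      · exact absurd (ha1 ▸ hγX) hr0
      · exact ⟨ha1, ha2⟩
    rw [hr0a, hr1b] at hRv
    rw [hr1b] at hrin
    have hmidw : G.IsWalk P.inner (mids.map Subtype.val) :=
      liftInnerWalk hwmid (fun v hv => (hinnOK v hv).1)
    have hglue1 : (Pt P.first e1.1).verts.reverse.getLast? = P.inner.head? := by
      rw [List.getLast?_reverse, hQv, hihead]; rfl
    have hw1 : G.IsWalk ((Pt P.first e1.1).verts.reverse ++ P.inner.tail)
        ((Pt P.first e1.1).edges.reverse ++ mids.map Subtype.val) :=
      (Pt P.first e1.1).isWalk.reverse.append hmidw hglue1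
    have hglue2 : ((Pt P.first e1.1).verts.reverse ++ P.inner.tail).getLast? =
        (Pt P.last em.1).verts.head? := by
      rw [List.getLast?_append_tail hglue1 hin, hilast, hRv]; rfl
    have hwalk' : G.IsWalk
        (((Pt P.first e1.1).verts.reverse ++ P.inner.tail) ++ (Pt P.last em.1).verts.tail)
        (((Pt P.first e1.1).edges.reverse ++ mids.map Subtype.val) ++ (Pt P.last em.1).edges) :=
      hw1.append (Pt P.last em.1).isWalk hglue2
    have hQlastv : (Pt P.first e1.1).verts.getLast? = some P.first := by
      rw [(Pt P.first e1.1).getLast_eq, (hBL2f e1.1 hcut1).2]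
    have hRlastv : (Pt P.last em.1).verts.getLast? = some P.last := by
      rw [(Pt P.last em.1).getLast_eq, (hBL2l em.1 hcut2).2]
    have hAne : (Pt P.first e1.1).verts.reverse ≠ [] := by rw [hQv]; simp
    have hABne : (Pt P.first e1.1).verts.reverse ++ P.inner.tail ≠ [] := by
      intro h; exact hAne (List.append_eq_nil_iff.1 h).1
    have hhead' : (((Pt P.first e1.1).verts.reverse ++ P.inner.tail) ++
        (Pt P.last em.1).verts.tail).head? = some P.first := by
      rw [List.head?_append_of_ne_nil _ hABne, List.head?_append_of_ne_nil _ hAne,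
        List.head?_reverse]
      exact hQlastv
    have hRvne : (Pt P.last em.1).verts ≠ [] := by rw [hRv]; simp
    have hlast' : (((Pt P.first e1.1).verts.reverse ++ P.inner.tail) ++
        (Pt P.last em.1).verts.tail).getLast? = some P.last := by
      rw [List.getLast?_append_tail hglue2 hRvne]
      exact hRlastv
    -- nodup
    have hinnc : P.inner = v2 :: P.inner.tail := List.eq_cons_of_head? hihead
    have hv2nt : v2 ∉ P.inner.tail := by
      rw [hinnc] at hndinner
      exact (List.nodup_cons.1 hndinner).1
    have hndit : P.inner.tail.Nodup := by
      rw [hinnc] at hndinner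
      exact (List.nodup_cons.1 hndinner).2
    have hndRt : (Pt P.last em.1).verts.tail.Nodup := by
      have := (Pt P.last em.1).nodup
      rw [hRv] at this ⊢
      exact (List.nodup_cons.1 this).2
    have hmemQ : ∀ x ∈ (Pt P.first e1.1).verts, x = v2 ∨ x ∈ X P.first := by
      intro x hx
      rw [hQv] at hx
      rcases List.mem_cons.1 hx with rfl | hx'
      · exact Or.inl rfl
      · exact Or.inr (hqin x hx')
    have hmemRt : ∀ x ∈ (Pt P.last em.1).verts.tail, x ∈ X P.last := by
      intro x hx
      rw [hRv] at hx
      exact hrin x hx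
    have hittail : ∀ x ∈ P.inner.tail, x ∈ P.inner := by
      intro x hx; rw [hinnc]; exact List.mem_cons_of_mem _ hx
    have hnd1 : ((Pt P.first e1.1).verts.reverse ++ P.inner.tail).Nodup := by
      rw [List.nodup_append]
      refine ⟨by simpa using (Pt P.first e1.1).nodup, hndit, ?_⟩
      intro x hx y hx2 hxy
      rw [← hxy] at hx2
      rcases hmemQ x (List.mem_reverse.1 hx) with rfl | hxX
      · exact hv2nt hx2
      · exact (hinnOK x (hittail x hx2)).2 _ hfT hxX
    have hnd' : (((Pt P.first e1.1).verts.reverse ++ P.inner.tail) ++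
        (Pt P.last em.1).verts.tail).Nodup := by
      rw [List.nodup_append]
      refine ⟨hnd1, hndRt, ?_⟩
      intro x hx y hx2 hxy
      rw [← hxy] at hx2
      have hxXl : x ∈ X P.last := hmemRt x hx2
      rcases List.mem_append.1 hx with hA | hB
      · rcases hmemQ x (List.mem_reverse.1 hA) with rfl | hxX
        · exact hv2X _ hlT hxXl
        · exact Set.disjoint_left.1 hdisj_tt hxX hxXl
      · exact (hinnOK x (hittail x hB)).2 _ hlT hxXl
    have hemlast : P.edges.getLast? = some em := by
      rw [hpe, ← List.cons_append]
      exact List.getLast?_concat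
    refine ⟨⟨P.first, P.last,
        ((Pt P.first e1.1).verts.reverse ++ P.inner.tail) ++ (Pt P.last em.1).verts.tail,
        ((Pt P.first e1.1).edges.reverse ++ mids.map Subtype.val) ++ (Pt P.last em.1).edges,
        hwalk', hnd', hhead', hlast'⟩, rfl, rfl, ⟨hfT, hlT, hne, ?_⟩, ?_, ?_, ?_, ?_⟩
    · -- inner vertices not terminals
      intro v hvI hvT
      simp only [Path.inner] at hvI
      obtain ⟨hvv, hvft, hvlt⟩ := List.inner_props hnd' hhead' hlast' hvI
      rcases List.mem_append.1 hvv with hAB | hC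
      · rcases List.mem_append.1 hAB with hA | hB
        · rcases hmemQ v (List.mem_reverse.1 hA) with hveq | hvX
          · rw [hveq] at hvT; exact hinnT v2 hv2in hvT
          · exact hvft (hXT _ hfT _ hvX hvT)
        · exact hinnT v (hittail v hB) hvT
      · exact hvlt (hXT _ hlT _ (hmemRt v hC) hvT)
    · -- edge superset
      intro f hf
      rw [hpe] at hf
      rcases List.mem_cons.1 hf with rfl | hf'
      · have : f.1 ∈ (Pt P.first f.1).edges := by rw [hQed]; simp
        exact List.mem_append.2 (Or.inl (List.mem_append.2 (Or.inl (List.mem_reverse.2 this))))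
      · rcases List.mem_append.1 hf' with hfm | hfm
        · exact List.mem_append.2 (Or.inl (List.mem_append.2 (Or.inr
            (List.mem_map.2 ⟨f, hfm, rfl⟩))))
        · simp only [List.mem_singleton] at hfm
          subst hfm
          have : f.1 ∈ (Pt P.last f.1).edges := by rw [hRed]; simp
          exact List.mem_append.2 (Or.inr this)
    · -- GoodEdge
      intro g hg
      have hfw1 : (∃ f ∈ P.edges, f.1 = e1.1) := ⟨e1, by rw [hpe]; simp, rfl⟩
      have hfwm : (∃ f ∈ P.edges, f.1 = em.1) := ⟨em, by rw [hpe]; simp, rfl⟩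
      rcases List.mem_append.1 hg with hAB | hC
      · rcases List.mem_append.1 hAB with hA | hB
        · have hgQ : g ∈ (Pt P.first e1.1).edges := List.mem_reverse.1 hA
          rw [hQed] at hgQ
          rcases List.mem_cons.1 hgQ with rfl | hg'
          · exact Or.inr ⟨P.first, hfT, e1.1, hcut1, hfw1, by rw [hQed]; simp, Or.inl rfl⟩
          · exact Or.inr ⟨P.first, hfT, e1.1, hcut1, hfw1,
              by rw [hQed]; exact List.mem_cons_of_mem _ hg', Or.inr (hQtin g hg')⟩
        · obtain ⟨f, hfm, rfl⟩ := List.mem_map.1 hB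
          exact Or.inl ⟨f, by rw [hpe]; simp [hfm], rfl⟩
      · rw [hRed] at hC
        rcases List.mem_cons.1 hC with rfl | hg'
        · exact Or.inr ⟨P.last, hlT, em.1, hcut2, hfwm, by rw [hRed]; simp, Or.inl rfl⟩
        · exact Or.inr ⟨P.last, hlT, em.1, hcut2, hfwm,
            by rw [hRed]; exact List.mem_cons_of_mem _ hg', Or.inr (hRtin g hg')⟩
    · -- first tail contained
      intro ea hea g hg
      rw [hpe] at hea
      simp only [List.head?_cons, Option.some.injEq] at hea
      subst hea
      exact List.mem_append.2 (Or.inl (List.mem_append.2 (Or.inl (List.mem_reverse.2 hg))))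
    · -- last tail contained
      intro ea hea g hg
      rw [hemlast] at hea
      simp only [Option.some.injEq] at hea
      subst hea
      exact List.mem_append.2 (Or.inr hg)

end Grapht

namespace Grapht

variable {V : Type u} {E : Type v} {G : Grapht V E} {X : V → Set V}

theorem good_disj
    (hmem : ∀ t ∈ G.T, t ∈ X t)
    (hdisj : ∀ t ∈ G.T, ∀ t' ∈ G.T, t ≠ t' → Disjoint (X t) (X t'))
    (Pt : V → E → G.Path)
    (hBL : ∀ t ∈ G.T,
      (∀ e ∈ G.edgeCut (X t), ∀ e' ∈ G.edgeCut (X t), e ≠ e' →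
        ∀ f, f ∈ (Pt t e).edges → f ∉ (Pt t e').edges) ∧
      ∀ e ∈ G.edgeCut (X t), (Pt t e).edges.head? = some e ∧ (Pt t e).last = t)
    {P1 P2 : (G.contract X).Path}
    (hdisjP : ∀ e, e ∈ P1.edges → e ∉ P2.edges) {g : E}
    (h1 : GoodEdge G X Pt P1 g) (h2 : GoodEdge G X Pt P2 g) : False := by
  have contra1 : ∀ (f : {e : E // ¬ ((G.I e).map (G.contractMap X)).IsDiag}) (u : V),
      u ∈ G.T → InsideE G X u f.1 → False := by
    intro f u hu ⟨a, b, hab, ha, hb⟩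
    apply f.2
    rw [hab, Sym2.map_pair_eq, (cm_eq_iff hmem hdisj hu).2 ha,
      (cm_eq_iff hmem hdisj hu).2 hb]
    exact Sym2.isDiag_iff_proj_eq |>.2 rfl
  have hval : ∀ f1 f2 : {e : E // ¬ ((G.I e).map (G.contractMap X)).IsDiag},
      f1.1 = f2.1 → f1 = f2 := fun f1 f2 h => Subtype.ext h
  rcases h1 with ⟨f1, hf1, rfl⟩ | ⟨u1, hu1, h1', hc1, ⟨f1, hf1, hfe1⟩, hg1, hd1⟩
  · rcases h2 with ⟨f2, hf2, he2⟩ | ⟨u2, hu2, h2', hc2, ⟨f2, hf2, hfe2⟩, hg2, hd2⟩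
    · exact hdisjP f1 hf1 (hval f1 f2 he2 ▸ hf2)
    · rcases hd2 with he2 | hins2
      · exact hdisjP f1 hf1 ((hval f1 f2 (he2.trans hfe2.symm)) ▸ hf2)
      · exact contra1 f1 u2 hu2 hins2
  · rcases h2 with ⟨f2, hf2, he2⟩ | ⟨u2, hu2, h2', hc2, ⟨f2, hf2, hfe2⟩, hg2, hd2⟩
    · rcases hd1 with he1 | hins1
      · refine hdisjP f1 hf1 ?_
        have : f1.1 = f2.1 := hfe1.trans (he1.symm.trans he2)
        exact hval f1 f2 this ▸ hf2
      · exact contra1 f2 u1 hu1 (he2 ▸ hins1)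
    · by_cases huu : u1 = u2
      · subst huu
        by_cases hhh : h1' = h2'
        · subst hhh
          exact hdisjP f1 hf1 (hval f1 f2 (hfe1.trans hfe2.symm) ▸ hf2)
        · exact (hBL u1 hu1).1 h1' hc1 h2' hc2 hhh g hg1 hg2
      · have hXdisj := hdisj u1 hu1 u2 hu2 huu
        rcases hd1 with he1 | ⟨a, b, hab, ha, hb⟩
        · rcases hd2 with he2 | ⟨a', b', hab', ha', hb'⟩
          · exact hdisjP f1 hf1
              (hval f1 f2 (hfe1.trans ((he1.symm.trans he2).trans hfe2.symm)) ▸ hf2)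
          · -- g = h1' crosses X u1, but both endpoints in X u2
            obtain ⟨u0, w0, huw, hu0, hw0⟩ := hc1
            rw [← he1] at huw
            have : u0 ∈ X u2 := by
              rcases Sym2.eq_iff.1 (huw.symm.trans hab') with ⟨hx1, hx2⟩ | ⟨hx1, hx2⟩
              · exact hx1 ▸ ha'
              · exact hx1 ▸ hb'
            exact Set.disjoint_left.1 hXdisj hu0 this
        · rcases hd2 with he2 | ⟨a', b', hab', ha', hb'⟩
          · obtain ⟨u0, w0, huw, hu0, hw0⟩ := hc2
            rw [← he2] at huw
            have : u0 ∈ X u1 := by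
              rcases Sym2.eq_iff.1 (huw.symm.trans hab) with ⟨hx1, hx2⟩ | ⟨hx1, hx2⟩
              · exact hx1 ▸ ha
              · exact hx1 ▸ hb
            exact Set.disjoint_left.1 hXdisj this hu0
          · have : a ∈ X u2 := by
              rcases Sym2.eq_iff.1 (hab.symm.trans hab') with ⟨hx1, hx2⟩ | ⟨hx1, hx2⟩
              · exact hx1 ▸ ha'
              · exact hx1 ▸ hb'
            exact Set.disjoint_left.1 hXdisj ha this

end Grapht

open Grapht in
/-- **Lifting lemma.** Systems of edge-disjoint `T`-paths of the contraction `G/ℱ` of a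
family of boundary-linked sets can be lifted to `G`, preserving endpoints, edges, and
(under covering assumptions) linking. -/
theorem lifting_lemma {V : Type u} {E : Type v} (G : Grapht V E) (X : V → Set V)
    (hmem : ∀ t ∈ G.T, t ∈ X t)
    (hdisj : ∀ t ∈ G.T, ∀ t' ∈ G.T, t ≠ t' → Disjoint (X t) (X t'))
    (Pt : V → E → G.Path)
    (hBL : ∀ t ∈ G.T,
      (∀ e ∈ G.edgeCut (X t), ∀ e' ∈ G.edgeCut (X t), e ≠ e' →
        ∀ f, f ∈ (Pt t e).edges → f ∉ (Pt t e').edges) ∧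
      ∀ e ∈ G.edgeCut (X t), (Pt t e).edges.head? = some e ∧ (Pt t e).last = t)
    (Ps : Set (G.contract X).Path) (hPs : (G.contract X).IsTPathSystem Ps) :
    ∃ Ps' : Set G.Path, G.IsTPathSystem Ps' ∧
      (∀ P ∈ Ps, ∃ P' ∈ Ps', P'.first = P.first ∧ P'.last = P.last ∧
        ∀ f, f ∈ P.edges → f.1 ∈ P'.edges) ∧
      ∀ t ∈ G.T,
        (∀ e ∈ (G.contract X).edgeCut {t}, ∃ P ∈ Ps, e ∈ P.edges) →
        (∀ e ∈ G.edgeCut {t}, ∃ f ∈ G.edgeCut (X t), e ∈ (Pt t f).edges) →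
        ∀ e ∈ G.edgeCut {t}, ∃ P' ∈ Ps', e ∈ P'.edges := by
  classical
  obtain ⟨t0, ht0, -⟩ := G.T_nontrivial
  have hcon : ∀ P : (G.contract X).Path, ∃ p' : G.Path,
      P ∈ Ps → (p'.first = P.first ∧ p'.last = P.last ∧ G.IsTPath p' ∧
        (∀ f ∈ P.edges, f.1 ∈ p'.edges) ∧
        (∀ g ∈ p'.edges, GoodEdge G X Pt P g) ∧
        (∀ e1, P.edges.head? = some e1 → ∀ g ∈ (Pt P.first e1.1).edges, g ∈ p'.edges) ∧
        (∀ em, P.edges.getLast? = some em → ∀ g ∈ (Pt P.last em.1).edges, g ∈ p'.edges)) := by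
    intro P
    by_cases h : P ∈ Ps
    · obtain ⟨p', hp'⟩ := construct hmem hdisj Pt hBL P (hPs.2 P h)
      exact ⟨p', fun _ => hp'⟩
    · exact ⟨⟨t0, t0, [t0], [], IsWalk.nil t0, by simp, rfl, rfl⟩, fun h' => absurd h' h⟩
  choose F hF using hcon
  refine ⟨F '' Ps, ⟨?_, ?_⟩, ?_, ?_⟩
  · -- edge-disjoint
    rintro p1 ⟨P1, hP1, rfl⟩ p2 ⟨P2, hP2, rfl⟩ hne12 g hg1 hg2
    have hP12 : P1 ≠ P2 := fun h => hne12 (by rw [h])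
    exact good_disj hmem hdisj Pt hBL (hPs.1 hP1 hP2 hP12)
      ((hF P1 hP1).2.2.2.2.1 g hg1) ((hF P2 hP2).2.2.2.2.1 g hg2)
  · -- T-paths
    rintro p ⟨P, hP, rfl⟩
    exact (hF P hP).2.2.1
  · -- endpoints and edges preserved
    intro P hP
    exact ⟨F P, Set.mem_image_of_mem F hP, (hF P hP).1, (hF P hP).2.1,
      fun f hf => (hF P hP).2.2.2.1 f hf⟩
  · -- linking
    intro t htT hcov1 hcov2 e he
    obtain ⟨f, hfcut, hePt⟩ := hcov2 e he
    obtain ⟨u0, w0, huw, hu0, hw0⟩ := hfcut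
    have hndiag : ¬ ((G.I f).map (G.contractMap X)).IsDiag := by
      rw [huw, Sym2.map_pair_eq, Sym2.isDiag_iff_proj_eq]
      intro hEq
      have hEq' : G.contractMap X u0 = G.contractMap X w0 := hEq
      have h1 : G.contractMap X u0 = t := (cm_eq_iff hmem hdisj htT).2 hu0
      exact hw0 ((cm_eq_iff hmem hdisj htT).1 (by rw [← hEq', h1]))
    have hIfc : (G.contract X).I (⟨f, hndiag⟩ :
        {e : E // ¬ ((G.I e).map (G.contractMap X)).IsDiag}) =
        s(t, G.contractMap X w0) := by
      rw [contract_I, huw, Sym2.map_pair_eq, (cm_eq_iff hmem hdisj htT).2 hu0]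
    have hfc_cut : (⟨f, hndiag⟩ : {e : E // ¬ ((G.I e).map (G.contractMap X)).IsDiag}) ∈
        (G.contract X).edgeCut {t} := by
      refine ⟨t, G.contractMap X w0, hIfc, rfl, ?_⟩
      intro h
      exact hw0 ((cm_eq_iff hmem hdisj htT).1 h)
    obtain ⟨P, hPmem, hfcP⟩ := hcov1 _ hfc_cut
    have htmem : t ∈ (G.contract X).I (⟨f, hndiag⟩ :
        {e : E // ¬ ((G.I e).map (G.contractMap X)).IsDiag}) := by
      rw [hIfc]; simp
    have htvert : t ∈ P.verts := P.isWalk.endpoints_mem hfcP htmem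
    have hTP := hPs.2 P hPmem
    rcases List.mem_split_ends P.head_eq P.getLast_eq htvert with h1 | h2 | h3
    · have hhe : P.edges.head? = some ⟨f, hndiag⟩ :=
        P.isWalk.head_edge P.nodup hfcP htmem (by rw [h1]; exact P.head_eq)
      have hsub := (hF P hPmem).2.2.2.2.2.1 _ hhe
      refine ⟨F P, Set.mem_image_of_mem F hPmem, hsub e ?_⟩
      rw [← h1]; exact hePt
    · have hle : P.edges.getLast? = some ⟨f, hndiag⟩ :=
        P.isWalk.last_edge P.nodup hfcP htmem (by rw [h2]; exact P.getLast_eq)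
      have hsub := (hF P hPmem).2.2.2.2.2.2 _ hle
      refine ⟨F P, Set.mem_image_of_mem F hPmem, hsub e ?_⟩
      rw [← h2]; exact hePt
    · exact absurd htT (hTP.2.2.2 t h3)
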